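/- arXiv:2209.00361 — 4 statements merged into one kernel-verified Lean document; each statement's English description precedes it below -/
import Mathlib

section
/- Let A be a d×d real symmetric matrix with smallest eigenvalue λ_min < 0 and largest eigenvalue λ_max < 1. Then for every natural number k, the operator norm of A(I−A)^k is at most −λ_min·(1−λ_min)^k + 1/(k+1). -/
open Matrix

private lemma scalar_bound_aux (k : ℕ) (e : ℝ) (he0 : 0 ≤ e) (he1 : e ≤ 1) :
    e * (1 - e)^k ≤ 1 / ((k:ℝ)+1) := by
  have hpos : (0:ℝ) < 1 + e := by linarith
  have h2 : (1 - e) ≤ 1 / (1 + e) := by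
    rw [le_div_iff₀ hpos]; nlinarith
  have h3 : (1 - e)^k ≤ (1/(1+e))^k := pow_le_pow_left₀ (by linarith) h2 k
  have h4 : (1:ℝ) + k * e ≤ (1 + e)^k := one_add_mul_le_pow (by linarith) k
  have h5 : (0:ℝ) < 1 + k * e := by positivity
  have h6 : (1/(1+e))^k ≤ 1/(1 + k*e) := by
    rw [div_pow, one_pow]
    exact one_div_le_one_div_of_le h5 h4
  have h7 : e / (1 + k*e) ≤ 1 / ((k:ℝ)+1) := by
    rw [div_le_div_iff₀ h5 (by positivity)]
    nlinarith
  calc e * (1-e)^k ≤ e * (1/(1+k*e)) := by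
        apply mul_le_mul_of_nonneg_left (h3.trans h6) he0
    _ = e / (1+k*e) := by ring
    _ ≤ _ := h7

private lemma scalar_bound' (k : ℕ) (e lmin lmax : ℝ) (hle : lmin ≤ e) (hge : e ≤ lmax)
    (hmin0 : lmin < 0) (hmax1 : lmax < 1) :
    |e * (1 - e)^k| ≤ -lmin * (1 - lmin)^k + 1 / ((k:ℝ)+1) := by
  have hk : (0:ℝ) < 1/((k:ℝ)+1) := by positivity
  have hm : 0 ≤ -lmin * (1 - lmin)^k := by
    apply mul_nonneg (by linarith) (pow_nonneg (by linarith) k)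
  rcases le_or_gt e 0 with h | h
  · have h1e : (0:ℝ) ≤ 1 - e := by linarith
    have habs : |e * (1-e)^k| = -e * (1-e)^k := by
      rw [abs_of_nonpos (mul_nonpos_of_nonpos_of_nonneg h (pow_nonneg h1e k))]; ring
    rw [habs]
    have : -e * (1-e)^k ≤ -lmin * (1-lmin)^k := by
      apply mul_le_mul (by linarith) (pow_le_pow_left₀ h1e (by linarith) k)
        (pow_nonneg h1e k) (by linarith)
    linarith
  · have h1e : (0:ℝ) ≤ 1 - e := by linarith
    have hnn : 0 ≤ e * (1-e)^k := mul_nonneg h.le (pow_nonneg h1e k)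
    rw [abs_of_nonneg hnn]
    have := scalar_bound_aux k e h.le (by linarith)
    linarith

private lemma diag_norm_le {d : ℕ} (v : Fin d → ℝ) (c : ℝ) (hc : 0 ≤ c)
    (hv : ∀ i, |v i| ≤ c) :
    ‖(Matrix.toEuclideanCLM (𝕜 := ℝ) (diagonal v) :
        EuclideanSpace ℝ (Fin d) →L[ℝ] EuclideanSpace ℝ (Fin d))‖ ≤ c := by
  apply ContinuousLinearMap.opNorm_le_bound _ hc
  intro x
  have hx : (Matrix.toEuclideanCLM (𝕜 := ℝ) (diagonal v)) x =
      (WithLp.equiv 2 _).symm ((diagonal v) *ᵥ ((WithLp.equiv 2 _) x)) := by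
    rw [show (diagonal v) *ᵥ ((WithLp.equiv 2 _) x)
      = toLin' (diagonal v) ((WithLp.equiv 2 _) x) from (toLin'_apply _ _).symm]
    rfl
  rw [hx]
  rw [EuclideanSpace.norm_eq, EuclideanSpace.norm_eq]
  rw [show c = Real.sqrt (c^2) by rw [Real.sqrt_sq hc]]
  rw [← Real.sqrt_mul (by positivity)]
  apply Real.sqrt_le_sqrt
  rw [Finset.mul_sum]
  apply Finset.sum_le_sum
  intro i _
  simp only [WithLp.equiv_symm_apply, WithLp.ofLp_toLp, mulVec_diagonal]
  rw [Real.norm_eq_abs, Real.norm_eq_abs, abs_mul, mul_pow]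
  apply mul_le_mul_of_nonneg_right _ (by positivity)
  exact pow_le_pow_left₀ (abs_nonneg _) (hv i) 2

private lemma conj_pow' {d : ℕ} (U B : Matrix (Fin d) (Fin d) ℝ)
    (h1 : star U * U = 1) (h2 : U * star U = 1) (k : ℕ) :
    (U * B * star U)^k = U * B^k * star U := by
  induction k with
  | zero => simpa using h2.symm
  | succ n ih =>
    rw [pow_succ, ih, pow_succ]
    simp only [mul_assoc]
    rw [← mul_assoc (star U) U, h1, one_mul]

private lemma conj_eq {d : ℕ} (A : Matrix (Fin d) (Fin d) ℝ) (hA : A.IsHermitian) (k : ℕ) :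
    A * (1 - A)^k = (hA.eigenvectorUnitary : Matrix (Fin d) (Fin d) ℝ) *
      diagonal (fun i => hA.eigenvalues i * (1 - hA.eigenvalues i)^k) *
      star (hA.eigenvectorUnitary : Matrix (Fin d) (Fin d) ℝ) := by
  set U : Matrix (Fin d) (Fin d) ℝ := (hA.eigenvectorUnitary : Matrix (Fin d) (Fin d) ℝ) with hUdef
  have h1 : star U * U = 1 := Matrix.mem_unitaryGroup_iff'.mp hA.eigenvectorUnitary.2
  have h2 : U * star U = 1 := Matrix.mem_unitaryGroup_iff.mp hA.eigenvectorUnitary.2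
  have hspec : A = U * diagonal (hA.eigenvalues) * star U := by
    have := hA.spectral_theorem
    simpa using this
  have hone : (1 - A) = U * diagonal (fun i => 1 - hA.eigenvalues i) * star U := by
    have hd : diagonal (fun i => 1 - hA.eigenvalues i)
        = 1 - diagonal hA.eigenvalues := by
      rw [← diagonal_one, ← diagonal_sub]
    rw [hd, mul_sub, sub_mul, mul_one, h2, ← hspec]
  have hdiag : diagonal hA.eigenvalues * (diagonal fun i => 1 - hA.eigenvalues i)^k
      = diagonal (fun i => hA.eigenvalues i * (1 - hA.eigenvalues i)^k) := by
    rw [diagonal_pow, diagonal_mul_diagonal]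
    rfl
  rw [hone, conj_pow' U _ h1 h2 k]
  calc A * (U * (diagonal fun i => 1 - hA.eigenvalues i) ^ k * star U)
      = (U * diagonal hA.eigenvalues * star U) *
        (U * (diagonal fun i => 1 - hA.eigenvalues i) ^ k * star U) :=
        congrArg (· * (U * (diagonal fun i => 1 - hA.eigenvalues i) ^ k * star U)) hspec
    _ = _ := by
        simp only [mul_assoc]
        rw [← mul_assoc (star U) U, h1, one_mul,
          ← mul_assoc (diagonal hA.eigenvalues), hdiag]

theorem matrix_power_opNorm_bound {d : ℕ} (A : Matrix (Fin d) (Fin d) ℝ)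
    (hA : A.IsHermitian) (lmin lmax : ℝ)
    (hmin : IsLeast (Set.range hA.eigenvalues) lmin)
    (hmax : IsGreatest (Set.range hA.eigenvalues) lmax)
    (hmin0 : lmin < 0) (hmax1 : lmax < 1) (k : ℕ) :
    ‖(Matrix.toEuclideanCLM (𝕜 := ℝ) (A * (1 - A) ^ k) :
        EuclideanSpace ℝ (Fin d) →L[ℝ] EuclideanSpace ℝ (Fin d))‖ ≤
      -lmin * (1 - lmin) ^ k + 1 / ((k : ℝ) + 1) := by
  set U : Matrix (Fin d) (Fin d) ℝ := (hA.eigenvectorUnitary : Matrix (Fin d) (Fin d) ℝ) with hUdef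
  have h1 : star U * U = 1 := Matrix.mem_unitaryGroup_iff'.mp hA.eigenvectorUnitary.2
  have h2 : U * star U = 1 := Matrix.mem_unitaryGroup_iff.mp hA.eigenvectorUnitary.2
  have hu : (Matrix.toEuclideanCLM (𝕜 := ℝ) U) ∈
      unitary (EuclideanSpace ℝ (Fin d) →L[ℝ] EuclideanSpace ℝ (Fin d)) := by
    rw [Unitary.mem_iff]
    constructor
    · rw [← StarHomClass.map_star, ← _root_.map_mul, h1, _root_.map_one]
    · rw [← StarHomClass.map_star, ← _root_.map_mul, h2, _root_.map_one]
  rw [conj_eq A hA k, _root_.map_mul, _root_.map_mul, StarHomClass.map_star, mul_assoc]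
  rw [CStarRing.norm_mem_unitary_mul _ hu, CStarRing.norm_mul_mem_unitary _ (Unitary.star_mem hu)]
  have hc : (0:ℝ) ≤ -lmin * (1 - lmin) ^ k + 1 / ((k : ℝ) + 1) := by
    have hm : 0 ≤ -lmin * (1 - lmin)^k :=
      mul_nonneg (by linarith) (pow_nonneg (by linarith) k)
    have hk : (0:ℝ) < 1/((k:ℝ)+1) := by positivity
    linarith
  apply diag_norm_le _ _ hc
  intro i
  exact scalar_bound' k (hA.eigenvalues i) lmin lmax (hmin.2 ⟨i, rfl⟩) (hmax.2 ⟨i, rfl⟩)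
    hmin0 hmax1
end

section
/- If f : ℝ^d → ℝ is L-gradient Lipschitz (i.e., ‖∇f(x) − ∇f(y)‖ ≤ L‖x−y‖ for all x, y) and x' = x − η v + ξ with ‖ξ‖ ≤ r and η > 0, then f(x') ≤ f(x) + η‖∇f(x) − v‖² − (η/2)‖∇f(x)‖² − (1/(2η) − L/2)‖x' − x‖² + r²/η. -/
open InnerProductSpace

lemma descent_aux {d : ℕ} (f : EuclideanSpace ℝ (Fin d) → ℝ) (L : ℝ)
    (hdiff : Differentiable ℝ f)
    (hlip : ∀ x y, ‖gradient f x - gradient f y‖ ≤ L * ‖x - y‖)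
    (x y : EuclideanSpace ℝ (Fin d)) :
    f y ≤ f x + (inner ℝ (gradient f x) (y - x) : ℝ) + L / 2 * ‖y - x‖ ^ 2 := by
  set u := y - x with hu
  have hg : ∀ t : ℝ, HasDerivAt (fun t : ℝ => f (x + t • u))
      ((inner ℝ (gradient f (x + t • u)) u : ℝ)) t := by
    intro t
    have hline : HasDerivAt (fun t : ℝ => x + t • u) u t := by
      simpa using ((hasDerivAt_id t).smul_const u).const_add x
    have hf := (hdiff (x + t • u)).hasGradientAt.hasFDerivAt
    have := hf.comp_hasDerivAt t hline
    simpa [InnerProductSpace.toDual_apply_apply, Function.comp_def] using this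
  set c1 : ℝ := (inner ℝ (gradient f x) u : ℝ)
  set c2 : ℝ := L / 2 * ‖u‖ ^ 2
  set φ : ℝ → ℝ := fun t => f x + t * c1 + c2 * t ^ 2 - f (x + t • u) with hφdef
  have hφ : ∀ t : ℝ, HasDerivAt φ
      (c1 + c2 * (2 * t) - (inner ℝ (gradient f (x + t • u)) u : ℝ)) t := by
    intro t
    have h1 : HasDerivAt (fun t : ℝ => f x + t * c1 + c2 * t ^ 2)
        (c1 + c2 * (2 * t)) t := by
      have := (((hasDerivAt_id t).mul_const c1).const_add (f x)).add
        (((hasDerivAt_pow 2 t)).const_mul c2)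
      simpa [mul_comm, mul_assoc, Pi.add_def] using this
    simpa [Pi.sub_def] using h1.sub (hg t)
  have hmono : MonotoneOn φ (Set.Icc (0:ℝ) 1) := by
    apply monotoneOn_of_deriv_nonneg (convex_Icc 0 1)
    · exact fun t _ => (hφ t).continuousAt.continuousWithinAt
    · exact fun t _ => ((hφ t).differentiableAt).differentiableWithinAt
    · intro t ht
      rw [interior_Icc] at ht
      rw [(hφ t).deriv]
      have hbound : (inner ℝ (gradient f (x + t • u)) u : ℝ) - c1 ≤ L * t * ‖u‖ ^ 2 := by
        have h1 : (inner ℝ (gradient f (x + t • u)) u : ℝ) - c1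
            = (inner ℝ (gradient f (x + t • u) - gradient f x) u : ℝ) := by
          simp [c1, inner_sub_left]
        rw [h1]
        calc (inner ℝ (gradient f (x + t • u) - gradient f x) u : ℝ)
            ≤ ‖gradient f (x + t • u) - gradient f x‖ * ‖u‖ := real_inner_le_norm _ _
          _ ≤ (L * ‖(x + t • u) - x‖) * ‖u‖ :=
              mul_le_mul_of_nonneg_right (hlip _ _) (norm_nonneg _)
          _ = L * t * ‖u‖ ^ 2 := by
              rw [add_sub_cancel_left, norm_smul, Real.norm_eq_abs,
                abs_of_pos ht.1]
              ring
      have : c2 * (2 * t) = L * t * ‖u‖ ^ 2 := by simp [c2]; ring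
      linarith
  have h01 := hmono (Set.mem_Icc.2 ⟨le_refl 0, zero_le_one⟩)
    (Set.mem_Icc.2 ⟨zero_le_one, le_refl 1⟩) zero_le_one
  have h0 : φ 0 = 0 := by simp [φ]
  have h1 : φ 1 = f x + c1 + c2 - f y := by
    simp [φ, hu]
  rw [h0, h1] at h01
  linarith

theorem descent_lemma {d : ℕ} (f : EuclideanSpace ℝ (Fin d) → ℝ) (L η r : ℝ)
    (hdiff : Differentiable ℝ f)
    (hlip : ∀ x y, ‖gradient f x - gradient f y‖ ≤ L * ‖x - y‖)
    (hη : 0 < η) (x v ξ : EuclideanSpace ℝ (Fin d)) (hξ : ‖ξ‖ ≤ r)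
    (x' : EuclideanSpace ℝ (Fin d)) (hx' : x' = x - η • v + ξ) :
    f x' ≤ f x + η * ‖gradient f x - v‖ ^ 2 - η / 2 * ‖gradient f x‖ ^ 2
      - (1 / (2 * η) - L / 2) * ‖x' - x‖ ^ 2 + r ^ 2 / η := by
  have haux := descent_aux f L hdiff hlip x x'
  set g := gradient f x with hg
  set u := x' - x with hu
  have hηgu : η • g + u = η • (g - v) + ξ := by
    rw [hu, hx']; module
  have hexp : ‖η • g + u‖ ^ 2 = η ^ 2 * ‖g‖ ^ 2 + 2 * (η * (inner ℝ g u : ℝ)) + ‖u‖ ^ 2 := by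
    rw [norm_add_sq_real, norm_smul, real_inner_smul_left, Real.norm_eq_abs,
      abs_of_pos hη]
    ring
  have hb : ‖η • (g - v) + ξ‖ ^ 2 ≤ 2 * η ^ 2 * ‖g - v‖ ^ 2 + 2 * r ^ 2 := by
    have h1 : ‖η • (g - v) + ξ‖ ≤ η * ‖g - v‖ + ‖ξ‖ := by
      calc ‖η • (g - v) + ξ‖ ≤ ‖η • (g - v)‖ + ‖ξ‖ := norm_add_le _ _
        _ = η * ‖g - v‖ + ‖ξ‖ := by
            rw [norm_smul, Real.norm_eq_abs, abs_of_pos hη]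
    have hξ0 : (0:ℝ) ≤ ‖ξ‖ := norm_nonneg _
    nlinarith [norm_nonneg (η • (g - v) + ξ), sq_nonneg (η * ‖g - v‖ - ‖ξ‖),
      mul_nonneg (mul_nonneg hη.le (norm_nonneg (g - v))) hξ0]
  have hkey : 2 * (η * (inner ℝ g u : ℝ))
      ≤ 2 * η ^ 2 * ‖g - v‖ ^ 2 + 2 * r ^ 2 - η ^ 2 * ‖g‖ ^ 2 - ‖u‖ ^ 2 := by
    have := hexp
    rw [hηgu] at this
    linarith
  have hdiv : (inner ℝ g u : ℝ)
      ≤ η * ‖g - v‖ ^ 2 - η / 2 * ‖g‖ ^ 2 - 1 / (2 * η) * ‖u‖ ^ 2 + r ^ 2 / η := by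
    rw [← sub_nonneg]
    have hne : η ≠ 0 := hη.ne'
    have expand : η * ‖g - v‖ ^ 2 - η / 2 * ‖g‖ ^ 2 - 1 / (2 * η) * ‖u‖ ^ 2 + r ^ 2 / η
        - (inner ℝ g u : ℝ)
        = (2 * η ^ 2 * ‖g - v‖ ^ 2 + 2 * r ^ 2 - η ^ 2 * ‖g‖ ^ 2 - ‖u‖ ^ 2
            - 2 * (η * (inner ℝ g u : ℝ))) / (2 * η) := by
      field_simp
      ring
    rw [expand]
    apply div_nonneg (by linarith) (by linarith)
  linarith
end

section
/- Let A = (a₁,…,a_k) be fixed vectors in ℝ^d with ∑ a_i = 0, and let x₁,…,x_l (l ≤ k) be sampled uniformly at random without replacement from A. Then for each 1 ≤ l < k, the process Y_s = (1/(k−s))·∑_{i=1}^s x_i, for s = 0,…,l, is a martingale with respect to the filtration generated by x₁,…,x_s. -/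
open MeasureTheory

noncomputable instance (k : ℕ) : MeasurableSpace (Equiv.Perm (Fin k)) := ⊤

/-- The filtration generated by the first `min s l` draws of a sample without
replacement (modeled by a uniformly random permutation). -/
def withoutReplacementFiltration (k l : ℕ) (hlk : l < k) :
    Filtration ℕ (⊤ : MeasurableSpace (Equiv.Perm (Fin k))) where
  seq s := MeasurableSpace.comap
    (fun ω : Equiv.Perm (Fin k) => fun i : Fin (min s l) =>
      ω (Fin.castLE (le_trans (min_le_right s l) hlk.le) i)) inferInstance
  mono' := by
    intro s t hst
    have h1 : min s l ≤ min t l := min_le_min hst le_rfl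
    have heq : (fun ω : Equiv.Perm (Fin k) => fun i : Fin (min s l) =>
          ω (Fin.castLE (le_trans (min_le_right s l) hlk.le) i))
        = (fun v : Fin (min t l) → Fin k => fun i : Fin (min s l) =>
            v (Fin.castLE h1 i)) ∘
          (fun ω : Equiv.Perm (Fin k) => fun i : Fin (min t l) =>
            ω (Fin.castLE (le_trans (min_le_right t l) hlk.le) i)) := rfl
    dsimp only
    rw [heq, ← MeasurableSpace.comap_comp]
    exact MeasurableSpace.comap_mono
      ((measurable_pi_lambda _ (fun i => measurable_pi_apply _)).comap_le)
  le' := fun s => le_top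

instance (k : ℕ) : MeasurableSingletonClass (Equiv.Perm (Fin k)) :=
  ⟨fun _ => MeasurableSpace.measurableSet_top⟩

open Finset in
/-- The key combinatorial fact: over the fiber of permutations whose first `m` values
are prescribed by `v`, the normalized sums of the first `m+1` values and of the first
`m` values have the same total. -/
lemma fiber_step_aux {d k m : ℕ} (hm : m ≤ k) (hn : m + 1 ≤ k) (hk : m + 1 < k)
    (a : Fin k → EuclideanSpace ℝ (Fin d)) (hsum : ∑ i, a i = 0) (v : Fin m → Fin k)
    (P : Finset (Equiv.Perm (Fin k)))
    (hP : ∀ ω, ω ∈ P ↔ ∀ i : Fin m, ω (Fin.castLE hm i) = v i) :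
    ∑ ω ∈ P, ((k : ℝ) - ((m + 1 : ℕ) : ℝ))⁻¹ • ∑ i : Fin (m + 1), a (ω (Fin.castLE hn i))
      = ∑ ω ∈ P, ((k : ℝ) - ((m : ℕ) : ℝ))⁻¹ • ∑ i : Fin m, a (ω (Fin.castLE hm i)) := by
  classical
  by_cases hv : Function.Injective v
  swap
  · have hPe : P = ∅ := by
      rw [Finset.eq_empty_iff_forall_notMem]
      intro ω hω
      refine hv fun i i' hii' => ?_
      have h1 := (hP ω).mp hω i
      have h2 := (hP ω).mp hω i'
      have h3 : ω (Fin.castLE hm i) = ω (Fin.castLE hm i') := by rw [h1, h2, hii']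
      have h4 := ω.injective h3
      exact Fin.castLE_injective hm h4
    simp [hPe]
  · set pm : Fin k := ⟨m, hn⟩ with hpm
    set S := ∑ i : Fin m, a (v i) with hS
    have hsplit : ∀ ω ∈ P, ∑ i : Fin (m + 1), a (ω (Fin.castLE hn i)) = S + a (ω pm) := by
      intro ω hω
      rw [Fin.sum_univ_castSucc]
      congr 1
      exact Finset.sum_congr rfl fun i _ => by
        rw [show Fin.castLE hn i.castSucc = Fin.castLE hm i from rfl, (hP ω).mp hω i]
    set c : Fin k → ℕ := fun j => (P.filter fun ω => ω pm = j).card with hc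
    have hzero : ∀ i : Fin m, c (v i) = 0 := by
      intro i
      rw [hc]
      simp only
      rw [Finset.card_eq_zero, Finset.filter_eq_empty_iff]
      intro ω hω h
      have h1 : ω (Fin.castLE hm i) = v i := (hP ω).mp hω i
      have h2 := ω.injective (h1.trans h.symm)
      have h3 : (i : ℕ) = m := congrArg Fin.val h2
      have := i.isLt
      omega
    have hconst : ∀ j ∈ (univ : Finset (Fin k)) \ image v univ,
        ∀ j' ∈ (univ : Finset (Fin k)) \ image v univ, c j = c j' := by
      intro j hj j' hj'
      have hjv : ∀ i, v i ≠ j := by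
        intro i hvi
        exact (Finset.mem_sdiff.mp hj).2 (Finset.mem_image.mpr ⟨i, Finset.mem_univ i, hvi⟩)
      have hj'v : ∀ i, v i ≠ j' := by
        intro i hvi
        exact (Finset.mem_sdiff.mp hj').2 (Finset.mem_image.mpr ⟨i, Finset.mem_univ i, hvi⟩)
      have key : ∀ (x y : Fin k), (∀ i, v i ≠ x) → (∀ i, v i ≠ y) →
          ∀ ω ∈ P.filter (fun ω => ω pm = x),
            Equiv.swap x y * ω ∈ P.filter fun ω => ω pm = y := by
        intro x y hx hy ω hω
        obtain ⟨hωP, hωx⟩ := Finset.mem_filter.mp hω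
        refine Finset.mem_filter.mpr ⟨(hP _).mpr fun i => ?_, ?_⟩
        · have := (hP ω).mp hωP i
          rw [Equiv.Perm.mul_apply, this, Equiv.swap_apply_of_ne_of_ne (hx i) (hy i)]
        · rw [Equiv.Perm.mul_apply, hωx, Equiv.swap_apply_left]
      refine Finset.card_nbij' (fun ω => Equiv.swap j j' * ω) (fun ω => Equiv.swap j j' * ω)
        (key j j' hjv hj'v) ?_ ?_ ?_
      · intro ω hω
        have := key j' j hj'v hjv ω hω
        rwa [Equiv.swap_comm]
      · intro ω _
        show Equiv.swap j j' * (Equiv.swap j j' * ω) = ω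
        rw [← mul_assoc, Equiv.swap_mul_self, one_mul]
      · intro ω _
        show Equiv.swap j j' * (Equiv.swap j j' * ω) = ω
        rw [← mul_assoc, Equiv.swap_mul_self, one_mul]
    have hcardP : P.card = ∑ j : Fin k, c j :=
      Finset.card_eq_sum_card_fiberwise fun ω _ => Finset.mem_univ (ω pm)
    have hT : ∑ ω ∈ P, a (ω pm) = ∑ j : Fin k, c j • a j := by
      have h1 := Finset.sum_fiberwise_of_maps_to (s := P) (t := (univ : Finset (Fin k)))
        (g := fun ω : Equiv.Perm (Fin k) => ω pm)
        (fun ω _ => Finset.mem_univ _) (fun ω : Equiv.Perm (Fin k) => a (ω pm))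
      rw [← h1]
      refine Finset.sum_congr rfl fun j _ => ?_
      calc ∑ ω ∈ P.filter (fun ω => ω pm = j), a (ω pm)
          = ∑ ω ∈ P.filter (fun ω => ω pm = j), a j :=
            Finset.sum_congr rfl fun ω hω => by rw [(Finset.mem_filter.mp hω).2]
        _ = c j • a j := Finset.sum_const _
    set R := (univ : Finset (Fin k)) \ image v univ with hR
    have hRcard : R.card = k - m := by
      rw [hR, Finset.card_sdiff_of_subset (Finset.subset_univ _), Finset.card_univ, Fintype.card_fin,
        Finset.card_image_of_injective _ hv, Finset.card_univ, Fintype.card_fin]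
    have hRne : R.Nonempty := by
      rw [← Finset.card_pos, hRcard]; omega
    obtain ⟨j₀, hj₀⟩ := hRne
    have hcR : ∀ j ∈ R, c j = c j₀ := fun j hj => hconst j hj j₀ hj₀
    have himage_zero : ∀ j ∈ image v univ, c j = 0 := by
      intro j hj
      obtain ⟨i, _, rfl⟩ := Finset.mem_image.mp hj
      exact hzero i
    have hSimage : ∑ j ∈ image v univ, a j = S := by
      rw [Finset.sum_image fun i _ i' _ h => hv h]
    have hSR : ∑ j ∈ R, a j = -S := by
      have h0 : (∑ j ∈ R, a j) + ∑ j ∈ image v univ, a j = ∑ j : Fin k, a j :=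
        Finset.sum_sdiff (Finset.subset_univ _)
      rw [hsum, hSimage] at h0
      exact eq_neg_of_add_eq_zero_left h0
    have hTval : ∑ ω ∈ P, a (ω pm) = -((c j₀ : ℝ) • S) := by
      have h1 : ∑ j : Fin k, c j • a j
          = (∑ j ∈ R, c j • a j) + ∑ j ∈ image v univ, c j • a j :=
        (Finset.sum_sdiff (Finset.subset_univ _)).symm
      have h2 : ∑ j ∈ image v univ, c j • a j = 0 :=
        Finset.sum_eq_zero fun j hj => by rw [himage_zero j hj, zero_smul]
      have h3 : ∑ j ∈ R, c j • a j = ∑ j ∈ R, c j₀ • a j :=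
        Finset.sum_congr rfl fun j hj => by rw [hcR j hj]
      rw [hT, h1, h2, add_zero, h3, ← Finset.smul_sum, hSR,
        ← Nat.cast_smul_eq_nsmul ℝ, smul_neg]
    have hcard2 : P.card = (k - m) * c j₀ := by
      have h1 : ∑ j : Fin k, c j = (∑ j ∈ R, c j) + ∑ j ∈ image v univ, c j :=
        (Finset.sum_sdiff (Finset.subset_univ _)).symm
      have h2 : ∑ j ∈ image v univ, c j = 0 := Finset.sum_eq_zero himage_zero
      have h3 : ∑ j ∈ R, c j = ∑ j ∈ R, c j₀ := Finset.sum_congr rfl hcR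
      rw [hcardP, h1, h2, add_zero, h3, Finset.sum_const, smul_eq_mul, hRcard]
    have hkm : ((k : ℝ) - m) ≠ 0 := by
      have : (m : ℝ) < k := by exact_mod_cast Nat.lt_of_lt_of_le (Nat.lt_succ_self m) hn
      linarith
    have hkm1 : ((k : ℝ) - ((m + 1 : ℕ) : ℝ)) ≠ 0 := by
      have : ((m + 1 : ℕ) : ℝ) < k := by exact_mod_cast hk
      linarith
    calc ∑ ω ∈ P, ((k : ℝ) - ((m + 1 : ℕ) : ℝ))⁻¹ • ∑ i : Fin (m + 1), a (ω (Fin.castLE hn i))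
        = ∑ ω ∈ P, ((k : ℝ) - ((m + 1 : ℕ) : ℝ))⁻¹ • (S + a (ω pm)) :=
          Finset.sum_congr rfl fun ω hω => by rw [hsplit ω hω]
      _ = ((k : ℝ) - ((m + 1 : ℕ) : ℝ))⁻¹ • ∑ ω ∈ P, (S + a (ω pm)) :=
          (Finset.smul_sum).symm
      _ = ((k : ℝ) - ((m + 1 : ℕ) : ℝ))⁻¹ •
            ((((k - m) * c j₀ : ℕ) : ℝ) • S + -((c j₀ : ℝ) • S)) := by
          rw [Finset.sum_add_distrib, Finset.sum_const, hTval, hcard2,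
            ← Nat.cast_smul_eq_nsmul ℝ]
      _ = ((c j₀ : ℝ)) • S := by
          rw [← sub_eq_add_neg, ← sub_smul, smul_smul]
          congr 1
          have hcast : (((k - m) * c j₀ : ℕ) : ℝ) = ((k : ℝ) - m) * c j₀ := by
            push_cast [Nat.cast_sub hm]; ring
          have e : ((m + 1 : ℕ) : ℝ) = (m : ℝ) + 1 := by push_cast; ring
          rw [hcast, e, inv_mul_eq_iff_eq_mul₀ (by rw [e] at hkm1; exact hkm1)]
          ring
      _ = ((k : ℝ) - ((m : ℕ) : ℝ))⁻¹ • ((((k - m) * c j₀ : ℕ) : ℝ) • S) := by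
          rw [smul_smul]
          congr 1
          have hcast : (((k - m) * c j₀ : ℕ) : ℝ) = ((k : ℝ) - m) * c j₀ := by
            push_cast [Nat.cast_sub hm]; ring
          rw [hcast, eq_comm, inv_mul_eq_iff_eq_mul₀ hkm]
      _ = ((k : ℝ) - ((m : ℕ) : ℝ))⁻¹ • (P.card • S) := by
          rw [hcard2, ← Nat.cast_smul_eq_nsmul ℝ]
      _ = ∑ ω ∈ P, ((k : ℝ) - ((m : ℕ) : ℝ))⁻¹ • ∑ i : Fin m, a (ω (Fin.castLE hm i)) := by
          rw [← Finset.sum_const, Finset.smul_sum]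
          refine Finset.sum_congr rfl fun ω hω => ?_
          congr 1
          exact (Finset.sum_congr rfl fun i _ => by rw [(hP ω).mp hω i]).symm

open Finset in
/-- Summing over a cylinder set: the normalized sums of the first `n = m+1` values and of
the first `m` values have the same total over any set determined by the first `m` values. -/
lemma set_step_aux {d k m n : ℕ} (hm : m ≤ k) (hn : n ≤ k) (hmn : n = m + 1) (hk : n < k)
    (a : Fin k → EuclideanSpace ℝ (Fin d)) (hsum : ∑ i, a i = 0)
    (A : Set (Fin m → Fin k)) :
    ∑ ω : Equiv.Perm (Fin k),
        ((fun ω' : Equiv.Perm (Fin k) => fun i : Fin m => ω' (Fin.castLE hm i)) ⁻¹' A).indicator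
          (fun ω' => ((k : ℝ) - ((n : ℕ) : ℝ))⁻¹ • ∑ i : Fin n, a (ω' (Fin.castLE hn i))) ω
      = ∑ ω : Equiv.Perm (Fin k),
        ((fun ω' : Equiv.Perm (Fin k) => fun i : Fin m => ω' (Fin.castLE hm i)) ⁻¹' A).indicator
          (fun ω' => ((k : ℝ) - ((m : ℕ) : ℝ))⁻¹ • ∑ i : Fin m, a (ω' (Fin.castLE hm i))) ω := by
  classical
  subst hmn
  simp only [Set.indicator_apply, Set.mem_preimage]
  rw [← Finset.sum_filter, ← Finset.sum_filter,
    ← Finset.sum_fiberwise_of_maps_to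
      (t := (univ : Finset (Fin m → Fin k)))
      (g := fun ω : Equiv.Perm (Fin k) => fun i : Fin m => ω (Fin.castLE hm i))
      (fun ω _ => Finset.mem_univ _) _,
    ← Finset.sum_fiberwise_of_maps_to
      (t := (univ : Finset (Fin m → Fin k)))
      (g := fun ω : Equiv.Perm (Fin k) => fun i : Fin m => ω (Fin.castLE hm i))
      (fun ω _ => Finset.mem_univ _) _]
  refine Finset.sum_congr rfl fun v _ => ?_
  by_cases hv : v ∈ A
  · refine fiber_step_aux hm hn hk a hsum v _ fun ω => ?_
    simp only [Finset.mem_filter, Finset.mem_univ, true_and]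
    constructor
    · rintro ⟨-, h⟩ i
      exact congrFun h i
    · intro h
      have hfe : (fun i => ω (Fin.castLE hm i)) = v := funext h
      exact ⟨hfe ▸ hv, hfe⟩
  · have he : ((univ : Finset (Equiv.Perm (Fin k))).filter
        (fun ω => (fun i => ω (Fin.castLE hm i)) ∈ A)).filter
        (fun ω => (fun i : Fin m => ω (Fin.castLE hm i)) = v) = ∅ := by
      rw [Finset.filter_eq_empty_iff]
      intro ω hω h
      exact hv (h ▸ (Finset.mem_filter.mp hω).2)
    rw [he]
    simp

/-- Strong measurability of the partial-sum process with respect to the filtration. -/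
lemma sm_aux {d k l : ℕ} (hlk : l < k) (a : Fin k → EuclideanSpace ℝ (Fin d)) (s t : ℕ)
    (h : min t l ≤ min s l) :
    StronglyMeasurable[(withoutReplacementFiltration k l hlk) s]
      (fun ω : Equiv.Perm (Fin k) => ((k : ℝ) - (min t l : ℕ))⁻¹ •
        ∑ i : Fin (min t l), a (ω (Fin.castLE (le_trans (min_le_right t l) hlk.le) i))) := by
  have heq : (fun ω : Equiv.Perm (Fin k) => ((k : ℝ) - (min t l : ℕ))⁻¹ •
        ∑ i : Fin (min t l), a (ω (Fin.castLE (le_trans (min_le_right t l) hlk.le) i)))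
      = (fun v : Fin (min s l) → Fin k => ((k : ℝ) - (min t l : ℕ))⁻¹ •
          ∑ i : Fin (min t l), a (v (Fin.castLE h i))) ∘
        (fun ω : Equiv.Perm (Fin k) => fun i : Fin (min s l) =>
          ω (Fin.castLE (le_trans (min_le_right s l) hlk.le) i)) := rfl
  rw [heq]
  exact ((measurable_of_countable _).comp (measurable_iff_comap_le.mpr le_rfl)).stronglyMeasurable

lemma f_congr_aux {d k : ℕ} (a : Fin k → EuclideanSpace ℝ (Fin d)) {n m : ℕ}
    (hnm : n = m) (hn : n ≤ k) (hm : m ≤ k) :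
    (fun ω : Equiv.Perm (Fin k) => ((k : ℝ) - (n : ℕ))⁻¹ •
      ∑ i : Fin n, a (ω (Fin.castLE hn i)))
    = (fun ω : Equiv.Perm (Fin k) => ((k : ℝ) - (m : ℕ))⁻¹ •
      ∑ i : Fin m, a (ω (Fin.castLE hm i))) := by
  subst hnm; rfl

/-- Set integrals with respect to the uniform distribution on a finite type. -/
lemma integral_uniform_set {α : Type*} [Fintype α] [Nonempty α] [MeasurableSpace α]
    [MeasurableSingletonClass α] {E : Type*} [NormedAddCommGroup E] [NormedSpace ℝ E]
    [CompleteSpace E] {A : Set α} (hA : MeasurableSet A) (f : α → E) :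
    ∫ x in A, f x ∂(PMF.uniformOfFintype α).toMeasure
      = (Fintype.card α : ℝ)⁻¹ • ∑ x, A.indicator f x := by
  rw [← integral_indicator hA, integral_fintype (Integrable.of_finite)]
  rw [Finset.smul_sum]
  refine Finset.sum_congr rfl fun x _ => ?_
  congr 1
  rw [measureReal_def, PMF.toMeasure_apply_singleton _ _ (measurableSet_singleton x),
    PMF.uniformOfFintype_apply]
  simp

/-- the normalized partial sums of a sample without replacement from
vectors summing to zero form a martingale. -/
theorem martingale_without_replacement {d k l : ℕ} (hl : 1 ≤ l) (hlk : l < k)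
    (a : Fin k → EuclideanSpace ℝ (Fin d))
    (hsum : ∑ i, a i = 0) :
    Martingale
      (fun s (ω : Equiv.Perm (Fin k)) =>
        ((k : ℝ) - (min s l : ℕ))⁻¹ •
          ∑ i : Fin (min s l), a (ω (Fin.castLE (le_trans (min_le_right s l) hlk.le) i)))
      (withoutReplacementFiltration k l hlk)
      (PMF.uniformOfFintype (Equiv.Perm (Fin k))).toMeasure := by
  set μ := (PMF.uniformOfFintype (Equiv.Perm (Fin k))).toMeasure with hμ
  set 𝒢 := withoutReplacementFiltration k l hlk with h𝒢
  set f := (fun s (ω : Equiv.Perm (Fin k)) =>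
      ((k : ℝ) - (min s l : ℕ))⁻¹ •
        ∑ i : Fin (min s l), a (ω (Fin.castLE (le_trans (min_le_right s l) hlk.le) i)))
    with hf
  have hint : ∀ s, Integrable (f s) μ := fun s => Integrable.of_finite
  have hadapted : ∀ s, StronglyMeasurable[𝒢 s] (f s) := fun s => sm_aux hlk a s s le_rfl
  have hstep : ∀ s, f s =ᵐ[μ] μ[f (s + 1) | 𝒢 s] := by
    intro s
    by_cases hs : s < l
    · refine ae_eq_condExp_of_forall_setIntegral_eq le_top (hint (s + 1))
        (fun A _ _ => (hint s).integrableOn) (fun A hA _ => ?_)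
        ((hadapted s).aestronglyMeasurable)
      obtain ⟨T, -, rfl⟩ := MeasurableSpace.measurableSet_comap.mp hA
      rw [integral_uniform_set MeasurableSpace.measurableSet_top (f s),
        integral_uniform_set MeasurableSpace.measurableSet_top (f (s + 1))]
      congr 1
      have hm : min s l ≤ k := le_trans (min_le_right s l) hlk.le
      have hn : min (s + 1) l ≤ k := le_trans (min_le_right (s + 1) l) hlk.le
      have hmn : min (s + 1) l = min s l + 1 := by omega
      have hk' : min (s + 1) l < k := by omega
      exact (set_step_aux hm hn hmn hk' a hsum T).symm
    · have hmin : min (s + 1) l = min s l := by omega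
      rw [condExp_of_stronglyMeasurable le_top
        (sm_aux hlk a s (s + 1) (le_of_eq hmin)) (hint (s + 1))]
      have hfe := f_congr_aux a hmin (le_trans (min_le_right (s + 1) l) hlk.le)
        (le_trans (min_le_right s l) hlk.le)
      rw [hfe]
  refine ⟨hadapted, fun i j hij => ?_⟩
  induction j, hij using Nat.le_induction with
  | base =>
      rw [condExp_of_stronglyMeasurable le_top (hadapted i) (hint i)]
  | succ j hij ih =>
      calc μ[f (j + 1)|𝒢 i]
          =ᵐ[μ] μ[μ[f (j + 1)|𝒢 j]|𝒢 i] :=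
            (condExp_condExp_of_le (𝒢.mono hij) (𝒢.le j)).symm
        _ =ᵐ[μ] μ[f j|𝒢 i] := condExp_congr_ae (hstep j).symm
        _ =ᵐ[μ] f i := ih
end

section
/- Let v^t = (1/n)∑_{i=1}^n y_i^t be the SLEDGE gradient estimator, where for minibatches I^s ⊆ [n] of size b, y_i^t is updated as in the SAGA/SARAH hybrid rule. Then the estimation error admits the exact decomposition: v^t − ∇f(x^t) = (1/n)·∑_{s=1}^t [ (|Ĩ_s^t|/b)·∑_{i∈I^s}(∇f_i(x^s) − ∇f_i(x^{s−1})) − ∑_{i∈Ĩ_s^t}(∇f_i(x^s) − ∇f_i(x^{s−1})) ] + (1/n)·∑_{i∈Ĩ_1^t}(y_i^0 − ∇f_i(x^0)), where Ĩ_s^t = [n] \ (I^s ∪ … ∪ I^t). -/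
open Finset

private lemma sledge_key {d n b : ℕ}
    (f : Fin n → EuclideanSpace ℝ (Fin d) → ℝ)
    (I : ℕ → Finset (Fin n))
    (x : ℕ → EuclideanSpace ℝ (Fin d))
    (y : ℕ → Fin n → EuclideanSpace ℝ (Fin d))
    (hy : ∀ s, 1 ≤ s → ∀ i, y s i =
      if i ∈ I s then gradient (f i) (x s)
      else y (s - 1) i +
        (b : ℝ)⁻¹ • ∑ j ∈ I s, (gradient (f j) (x s) - gradient (f j) (x (s - 1))))
    (t : ℕ) (ht : 1 ≤ t) (i : Fin n) :
    y t i - gradient (f i) (x t) =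
      (∑ s ∈ Finset.Icc 1 t,
        ((if i ∈ Finset.univ \ (Finset.Icc s t).biUnion I then
            (b : ℝ)⁻¹ • ∑ j ∈ I s, (gradient (f j) (x s) - gradient (f j) (x (s - 1)))
          else 0)
          - (if i ∈ Finset.univ \ (Finset.Icc s t).biUnion I then
              (gradient (f i) (x s) - gradient (f i) (x (s - 1)))
            else 0)))
      + (if i ∈ Finset.univ \ (Finset.Icc 1 t).biUnion I then
          (y 0 i - gradient (f i) (x 0)) else 0) := by
  induction t, ht using Nat.le_induction with
  | base =>
    have h1 := hy 1 le_rfl i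
    by_cases hi : i ∈ I 1
    · have hP : ¬ (∀ u : ℕ, 1 ≤ u → u ≤ 1 → i ∉ I u) := fun h => h 1 le_rfl le_rfl hi
      simp [h1, hi, hP]
    · rw [h1, if_neg hi]
      simp only [Finset.Icc_self, Finset.sum_singleton, Finset.singleton_biUnion]
      rw [if_pos (by simp [hi]), if_pos (by simp [hi]), if_pos (by simp [hi])]
      abel
  | succ t ht ih =>
    have hmem : ∀ s, i ∉ I (t+1) →
        (i ∈ Finset.univ \ (Finset.Icc s (t+1)).biUnion I ↔
          i ∈ Finset.univ \ (Finset.Icc s t).biUnion I) := by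
      intro s hi
      simp only [Finset.mem_sdiff, Finset.mem_univ, true_and, Finset.mem_biUnion, not_exists,
        not_and, Finset.mem_Icc]
      constructor
      · intro h u hu; exact h u ⟨hu.1, hu.2.trans (Nat.le_succ t)⟩
      · intro h u hu hiu
        rcases Nat.lt_or_ge u (t+1) with h' | h'
        · exact h u ⟨hu.1, Nat.lt_succ_iff.mp h'⟩ hiu
        · exact hi (by rwa [le_antisymm hu.2 h'] at hiu)
    have h1 := hy (t+1) (Nat.le_add_left 1 t) i
    simp only [Nat.add_sub_cancel] at h1
    by_cases hi : i ∈ I (t+1)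
    · have hz : ∀ s, s ≤ t + 1 → i ∉ Finset.univ \ (Finset.Icc s (t+1)).biUnion I := by
        intro s hs
        simp only [Finset.mem_sdiff, Finset.mem_univ, true_and, not_not]
        exact Finset.mem_biUnion.mpr ⟨t+1, Finset.mem_Icc.mpr ⟨hs, le_rfl⟩, hi⟩
      rw [h1, if_pos hi, sub_self]
      rw [show (∑ s ∈ Finset.Icc 1 (t+1),
        ((if i ∈ Finset.univ \ (Finset.Icc s (t+1)).biUnion I then
            (b : ℝ)⁻¹ • ∑ j ∈ I s, (gradient (f j) (x s) - gradient (f j) (x (s - 1)))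
          else 0)
          - (if i ∈ Finset.univ \ (Finset.Icc s (t+1)).biUnion I then
              (gradient (f i) (x s) - gradient (f i) (x (s - 1)))
            else 0))) = ∑ s ∈ Finset.Icc 1 (t+1), (0 : EuclideanSpace ℝ (Fin d)) from
        Finset.sum_congr rfl (fun s hs => by
          rw [if_neg (hz s (Finset.mem_Icc.mp hs).2), if_neg (hz s (Finset.mem_Icc.mp hs).2)]
          simp)]
      rw [if_neg (hz 1 (Nat.le_add_left 1 t))]
      simp
    · have htop : i ∈ Finset.univ \ (Finset.Icc (t+1) (t+1)).biUnion I := by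
        simp [hi]
      have hsum : (∑ s ∈ Finset.Icc 1 (t+1),
        ((if i ∈ Finset.univ \ (Finset.Icc s (t+1)).biUnion I then
            (b : ℝ)⁻¹ • ∑ j ∈ I s, (gradient (f j) (x s) - gradient (f j) (x (s - 1)))
          else 0)
          - (if i ∈ Finset.univ \ (Finset.Icc s (t+1)).biUnion I then
              (gradient (f i) (x s) - gradient (f i) (x (s - 1)))
            else 0))) =
        (∑ s ∈ Finset.Icc 1 t,
        ((if i ∈ Finset.univ \ (Finset.Icc s t).biUnion I then
            (b : ℝ)⁻¹ • ∑ j ∈ I s, (gradient (f j) (x s) - gradient (f j) (x (s - 1)))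
          else 0)
          - (if i ∈ Finset.univ \ (Finset.Icc s t).biUnion I then
              (gradient (f i) (x s) - gradient (f i) (x (s - 1)))
            else 0)))
        + ((b : ℝ)⁻¹ • ∑ j ∈ I (t+1), (gradient (f j) (x (t+1)) - gradient (f j) (x t))
            - (gradient (f i) (x (t+1)) - gradient (f i) (x t))) := by
        rw [Finset.sum_Icc_succ_top (Nat.le_add_left 1 t)]
        congr 1
        · exact Finset.sum_congr rfl (fun s hs => by
            rw [if_congr (hmem s hi) rfl rfl, if_congr (hmem s hi) rfl rfl])
        · rw [if_pos htop, if_pos htop, Nat.add_sub_cancel]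
      rw [h1, if_neg hi, hsum, if_congr (hmem 1 hi) rfl rfl]
      have hcalc : y t i + (b : ℝ)⁻¹ • ∑ j ∈ I (t+1),
          (gradient (f j) (x (t+1)) - gradient (f j) (x t)) - gradient (f i) (x (t+1)) =
          (y t i - gradient (f i) (x t))
          + ((b : ℝ)⁻¹ • ∑ j ∈ I (t+1), (gradient (f j) (x (t+1)) - gradient (f j) (x t))
            - (gradient (f i) (x (t+1)) - gradient (f i) (x t))) := by abel
      rw [hcalc, ih]
      abel

theorem sledge_error_decomposition {d n b : ℕ}
    (f : Fin n → EuclideanSpace ℝ (Fin d) → ℝ)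
    (hdiff : ∀ i, Differentiable ℝ (f i))
    (t : ℕ) (ht : 1 ≤ t)
    (I : ℕ → Finset (Fin n)) (hcard : ∀ s, (I s).card = b)
    (x : ℕ → EuclideanSpace ℝ (Fin d))
    (y : ℕ → Fin n → EuclideanSpace ℝ (Fin d))
    (hy : ∀ s, 1 ≤ s → ∀ i, y s i =
      if i ∈ I s then gradient (f i) (x s)
      else y (s - 1) i +
        (b : ℝ)⁻¹ • ∑ j ∈ I s, (gradient (f j) (x s) - gradient (f j) (x (s - 1)))) :
    (n : ℝ)⁻¹ • ∑ i, y t i - (n : ℝ)⁻¹ • ∑ i, gradient (f i) (x t) =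
      (n : ℝ)⁻¹ • ∑ s ∈ Finset.Icc 1 t,
        (((((Finset.univ \ (Finset.Icc s t).biUnion I).card : ℝ) / b) •
            ∑ i ∈ I s, (gradient (f i) (x s) - gradient (f i) (x (s - 1))))
          - ∑ i ∈ Finset.univ \ (Finset.Icc s t).biUnion I,
              (gradient (f i) (x s) - gradient (f i) (x (s - 1))))
      + (n : ℝ)⁻¹ • ∑ i ∈ Finset.univ \ (Finset.Icc 1 t).biUnion I,
          (y 0 i - gradient (f i) (x 0)) := by
  rw [← smul_sub, ← smul_add, ← Finset.sum_sub_distrib]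
  congr 1
  rw [Finset.sum_congr rfl (fun i _ => sledge_key f I x y hy t ht i)]
  rw [Finset.sum_add_distrib, Finset.sum_comm]
  congr 1
  · refine Finset.sum_congr rfl (fun s _ => ?_)
    rw [Finset.sum_sub_distrib]
    congr 1
    · rw [Finset.sum_ite_mem, Finset.univ_inter, Finset.sum_const, ← Nat.cast_smul_eq_nsmul ℝ,
        smul_smul, div_eq_mul_inv]
    · rw [Finset.sum_ite_mem, Finset.univ_inter]
  · rw [Finset.sum_ite_mem, Finset.univ_inter]
end
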